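/- The fixed point of a primitive substitution is uniformly recurrent. -/

import Mathlib

namespace Cobham

open Filter

variable {A : Type*} {B : Type*}

/-- The factor `X_i X_{i+1} ... X_{i+n-1}` of the sequence `X`. -/
def word (X : ℕ → A) (i n : ℕ) : List A := (List.range n).map fun k => X (i + k)

/-- `u` occurs in `X` at position `i`. -/
def OccursAt (X : ℕ → A) (u : List A) (i : ℕ) : Prop := word X i u.length = u

def IsFactor (X : ℕ → A) (u : List A) : Prop := ∃ i, OccursAt X u i

def IsPrefix (X : ℕ → A) (u : List A) : Prop := OccursAt X u 0

/-- Uniformly recurrent: gaps between successive occurrences of any factor are bounded. -/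
def UnifRec (X : ℕ → A) : Prop :=
  ∀ u, IsFactor X u → ∃ g : ℕ, ∀ i : ℕ, ∃ j, i ≤ j ∧ j ≤ i + g ∧ OccursAt X u j

/-- Return words on `u`: factors between two successive occurrences of `u` in `X`. -/
def ReturnWords (X : ℕ → A) (u : List A) : Set (List A) :=
  { v | ∃ i j, OccursAt X u i ∧ OccursAt X u j ∧ i < j ∧
      (∀ k, i < k → k < j → ¬ OccursAt X u k) ∧ v = word X i (j - i) }

/-- Application of a morphism to a word, by concatenation. -/
def wordApply (σ : A → List B) (w : List A) : List B := w.flatMap σ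

/-- Iterate of a morphism. -/
def mPow (σ : A → List A) : ℕ → A → List A
  | 0 => fun a => [a]
  | k + 1 => fun a => wordApply σ (mPow σ k a)

def Nonerasing (σ : A → List A) : Prop := ∀ a, σ a ≠ []

/-- Primitivity: some power of the morphism maps every letter to a word
containing every letter. -/
def Primitive (σ : A → List A) : Prop := ∃ k, 0 < k ∧ ∀ a b : A, b ∈ mPow σ k a

/-- Primitivity restricted to a set of letters. -/
def PrimitiveOn (σ : A → List A) (S : Set A) : Prop :=
  ∃ k, 0 < k ∧ ∀ a ∈ S, ∀ b ∈ S, b ∈ mPow σ k a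

/-- `X` is a fixed point of `σ`: the image of every prefix of `X` is a prefix of `X`. -/
def IsFixedPt (σ : A → List A) (X : ℕ → A) : Prop :=
  ∀ n, OccursAt X (wordApply σ (word X 0 n)) 0

def UltPeriodic (X : ℕ → A) : Prop :=
  ∃ N p : ℕ, 0 < p ∧ ∀ n, N ≤ n → X (n + p) = X n

def Periodic (X : ℕ → A) : Prop := ∃ p : ℕ, 0 < p ∧ ∀ n, X (n + p) = X n

/-- `u` occurs at position `i` inside the word `w`. -/
def WOcc (u w : List A) (i : ℕ) : Prop :=
  i + u.length ≤ w.length ∧ (w.drop i).take u.length = u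

/-- `D` is the derived sequence of `X` on `u`: a sequence of return words on `u`
whose concatenation is `X`. -/
def IsDerived (X : ℕ → A) (u : List A) (D : ℕ → List A) : Prop :=
  (∀ n, D n ∈ ReturnWords X u) ∧ ∀ n, OccursAt X ((word D 0 n).flatten) 0

/-- `τu` is the return substitution of `τ` on `u` (on the alphabet of return words):
`Θ_u ∘ τ_u = τ ∘ Θ_u`. -/
def RetSub (τ : A → List A) (X : ℕ → A) (u : List A)
    (τu : List A → List (List A)) : Prop :=
  ∀ r ∈ ReturnWords X u,
    (∀ s ∈ τu r, s ∈ ReturnWords X u) ∧ (τu r).flatten = wordApply τ r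

/-- Eigenvalue of a complex matrix. -/
def IsEig {n : Type*} [Fintype n] (M : Matrix n n ℂ) (μ : ℂ) : Prop :=
  ∃ v : n → ℂ, v ≠ 0 ∧ M.mulVec v = μ • v

/-- Incidence matrix of a morphism, as a complex matrix. -/
def incMat [Fintype A] [DecidableEq A] (σ : A → List A) : Matrix A A ℂ :=
  Matrix.of fun i j => (((σ j).count i : ℕ) : ℂ)

/-- Incidence matrix of a return substitution, indexed by the set of return words. -/
def retMat [DecidableEq A] (τu : List A → List (List A)) (S : Set (List A))
    [Fintype S] : Matrix S S ℂ :=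
  Matrix.of fun i j => (((τu (j : List A)).count (i : List A) : ℕ) : ℂ)

/-- `α` is the dominant eigenvalue of the incidence matrix of `σ`. -/
def IsDomEig [Fintype A] [DecidableEq A] (σ : A → List A) (α : ℝ) : Prop :=
  IsEig (incMat σ) (α : ℂ) ∧ ∀ μ : ℂ, IsEig (incMat σ) μ → ‖μ‖ ≤ α

/-- `X` is `α`-substitutive: the image under a letter-to-letter morphism of the
fixed point of a primitive substitution with dominant eigenvalue `α`. -/
def IsSubstitutiveWith {A : Type*} (α : ℝ) (X : ℕ → A) : Prop :=
  ∃ (C : Type) (hF : Fintype C) (hD : DecidableEq C) (σ : C → List C) (c : C)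
    (Y : ℕ → C) (ψ : C → A),
    Nonerasing σ ∧ (σ c).head? = some c ∧ Primitive σ ∧
    Y 0 = c ∧ IsFixedPt σ Y ∧ (∀ n, X n = ψ (Y n)) ∧ @IsDomEig C hF hD σ α

/-- Perron number: a real algebraic integer `α ≥ 1` strictly dominating the
absolute values of its other conjugates. -/
def IsPerron (α : ℝ) : Prop :=
  1 ≤ α ∧ IsIntegral ℤ α ∧
    ∀ β : ℂ, Polynomial.aeval β (minpoly ℤ α) = 0 → β ≠ (α : ℂ) → ‖β‖ < α

lemma word_length (X : ℕ → A) (i n : ℕ) : (word X i n).length = n := by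
  simp [word]

lemma word_append (X : ℕ → A) (i m n : ℕ) :
    word X i (m + n) = word X i m ++ word X (i + m) n := by
  simp only [word, List.range_add, List.map_append, List.map_map]
  congr 1
  apply List.map_congr_left
  intro k _
  simp only [Function.comp]; ring_nf

lemma word_one (X : ℕ → A) (i : ℕ) : word X i 1 = [X i] := by
  have : List.range 1 = [0] := rfl
  simp [word, this]

lemma occursAt_word (X : ℕ → A) (i n : ℕ) : OccursAt X (word X i n) i := by
  simp [OccursAt, word_length]

lemma occursAt_sub {X : ℕ → A} {w l v r : List A} {i : ℕ}
    (h : OccursAt X w i) (hw : w = l ++ v ++ r) :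
    OccursAt X v (i + l.length) := by
  have hlen : w.length = l.length + (v.length + r.length) := by
    subst hw; simp [add_assoc]
  have h1 : word X i w.length =
      word X i l.length ++ (word X (i + l.length) v.length ++
        word X (i + l.length + v.length) r.length) := by
    rw [hlen, word_append, word_append]
  rw [h, hw] at h1
  have h2 : l ++ (v ++ r) = word X i l.length ++ (word X (i + l.length) v.length ++
        word X (i + l.length + v.length) r.length) := by
    rw [← h1]; simp
  have h3 := (List.append_inj h2 (word_length X i l.length).symm).2
  have h4 := (List.append_inj h3 (word_length X (i + l.length) v.length).symm).1
  exact h4.symm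

lemma wordApply_append (σ : A → List B) (w v : List A) :
    wordApply σ (w ++ v) = wordApply σ w ++ wordApply σ v := by
  simp [wordApply]

lemma wordApply_singleton (σ : A → List B) (a : A) : wordApply σ [a] = σ a := by
  simp [wordApply]

lemma mPow_add (σ : A → List A) (m n : ℕ) (a : A) :
    mPow σ (m + n) a = wordApply (mPow σ n) (mPow σ m a) := by
  induction n with
  | zero => simp [mPow, wordApply]
  | succ n ih =>
      show wordApply σ (mPow σ (m + n) a) = _
      rw [ih]
      simp only [wordApply, List.flatMap_assoc]
      rfl

lemma length_wordApply_ge (σ : A → List A) (hne : Nonerasing σ) (w : List A) :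
    w.length ≤ (wordApply σ w).length := by
  induction w with
  | nil => simp [wordApply]
  | cons a w ih =>
      have h : wordApply σ (a :: w) = σ a ++ wordApply σ w := rfl
      rw [h]
      simp only [List.length_append, List.length_cons]
      have h1 : 1 ≤ (σ a).length := List.length_pos_iff.mpr (hne a)
      omega

lemma length_wordApply_ge2 (σ : A → List A) (h2 : ∀ b, 2 ≤ (σ b).length) (w : List A) :
    2 * w.length ≤ (wordApply σ w).length := by
  induction w with
  | nil => simp [wordApply]
  | cons a w ih =>
      have h : wordApply σ (a :: w) = σ a ++ wordApply σ w := rfl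
      rw [h]
      simp only [List.length_append, List.length_cons]
      have := h2 a
      omega

lemma mPow_nonerasing {σ : A → List A} (hne : Nonerasing σ) (n : ℕ) :
    Nonerasing (mPow σ n) := by
  induction n with
  | zero => intro a; simp [mPow]
  | succ n ih =>
      intro a h
      obtain ⟨x, hx⟩ := List.exists_mem_of_ne_nil _ (ih a)
      exact hne x (List.flatMap_eq_nil_iff.mp h x hx)

lemma prefix_mPow {τ : A → List A} {a : A} {X : ℕ → A}
    (hX0 : X 0 = a) (hfix : IsFixedPt τ X) (n : ℕ) :
    OccursAt X (mPow τ n a) 0 := by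
  induction n with
  | zero =>
      show word X 0 [a].length = [a]
      rw [show ([a] : List A).length = 1 from rfl, word_one, hX0]
  | succ n ih =>
      have h := hfix (mPow τ n a).length
      rw [show word X 0 (mPow τ n a).length = mPow τ n a from ih] at h
      exact h

lemma fixedPt_mPow {τ : A → List A} {X : ℕ → A} (hfix : IsFixedPt τ X) (N : ℕ) :
    ∀ n, OccursAt X (wordApply (mPow τ N) (word X 0 n)) 0 := by
  induction N with
  | zero =>
      intro n
      have h : wordApply (mPow τ 0) (word X 0 n) = word X 0 n := by
        simp [wordApply, mPow]
      rw [h]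
      exact occursAt_word X 0 n
  | succ N ih =>
      intro n
      have hcomp : wordApply (mPow τ (N + 1)) (word X 0 n) =
          wordApply τ (wordApply (mPow τ N) (word X 0 n)) := by
        simp only [wordApply, List.flatMap_assoc]
        rfl
      rw [hcomp]
      have h1 := ih n
      have h2 := hfix (wordApply (mPow τ N) (word X 0 n)).length
      rw [h1] at h2
      exact h2

lemma word_take (X : ℕ → A) (i n m : ℕ) :
    (word X i n).take m = word X i (min m n) := by
  simp only [word, ← List.map_take, List.take_range]

lemma word_prefix_eq {X : ℕ → A} {w : List A} (h : OccursAt X w 0) (m : ℕ)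
    (hm : m ≤ w.length) : word X 0 m = w.take m := by
  conv_rhs => rw [← h]
  rw [word_take, min_eq_left hm]

lemma le_foldr_max (l : List ℕ) : 1 ≤ l.foldr max 1 := by
  induction l with
  | nil => simp
  | cons x l ih => simp only [List.foldr_cons]; omega

lemma mem_le_foldr_max {l : List ℕ} {x : ℕ} (h : x ∈ l) : x ≤ l.foldr max 1 := by
  induction l with
  | nil => simp at h
  | cons y l ih =>
      rcases List.mem_cons.mp h with rfl | h'
      · exact le_max_left _ _
      · exact (ih h').trans (le_max_right _ _)

theorem stmt19 {A : Type*} (τ : A → List A) (a : A) (X : ℕ → A)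
    (hne : Nonerasing τ) (hhead : (τ a).head? = some a) (hprim : Primitive τ)
    (hX0 : X 0 = a) (hfix : IsFixedPt τ X) :
    UnifRec X := by
  obtain ⟨k, hk, hkall⟩ := hprim
  by_cases hA : ∀ b : A, b = a
  · -- trivial case: all letters are equal, X is constant
    intro u ⟨i0, hi0⟩
    refine ⟨0, fun i => ⟨i, le_refl i, by omega, ?_⟩⟩
    have hword : ∀ i j n, word X i n = word X j n := by
      intro i j n
      simp only [word]
      apply List.map_congr_left
      intro c _
      rw [hA (X (i + c)), hA (X (j + c))]
    show word X i u.length = u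
    rw [hword i i0]
    exact hi0
  · push_neg at hA
    obtain ⟨b0, hb0⟩ := hA
    have h2 : ∀ b, 2 ≤ (mPow τ k b).length := by
      intro b
      have ha : a ∈ mPow τ k b := hkall b a
      have hb : b0 ∈ mPow τ k b := hkall b b0
      rcases hl : mPow τ k b with _ | ⟨c, _ | ⟨d, l⟩⟩ <;> rw [hl] at ha hb
      · simp at ha
      · simp at ha hb; exact absurd (hb.trans ha.symm) hb0
      · simp
    have hgrow : ∀ m : ℕ, ∃ n, m ≤ (mPow τ n a).length := by
      intro m
      refine ⟨k * m, ?_⟩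
      have key : ∀ j, j + 1 ≤ (mPow τ (k * j) a).length := by
        intro j
        induction j with
        | zero => simp [mPow]
        | succ j ih =>
            have heq : mPow τ (k * (j + 1)) a =
                wordApply (mPow τ k) (mPow τ (k * j) a) := by
              rw [show k * (j + 1) = k * j + k by ring, mPow_add]
            have h := length_wordApply_ge2 (mPow τ k) h2 (mPow τ (k * j) a)
            rw [← heq] at h
            omega
      have := key m
      omega
    intro u ⟨i0, hi0⟩
    obtain ⟨n, hn⟩ := hgrow (i0 + u.length)
    have hupre : u <:+: mPow τ n a := by
      have hpre : word X 0 (i0 + u.length) = (mPow τ n a).take (i0 + u.length) :=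
        word_prefix_eq (prefix_mPow hX0 hfix n) _ hn
      have hsplit : word X 0 (i0 + u.length) = word X 0 i0 ++ u := by
        rw [word_append, Nat.zero_add, hi0]
      refine List.IsInfix.trans (l₂ := (mPow τ n a).take (i0 + u.length)) ?_
        (List.take_prefix _ _).isInfix
      rw [← hpre, hsplit]
      exact ⟨word X 0 i0, [], by simp⟩
    set N := n + k with hN
    have hblock : ∀ b, u <:+: mPow τ N b := by
      intro b
      have ha : a ∈ mPow τ k b := hkall b a
      obtain ⟨s, t, hst⟩ := List.append_of_mem ha
      have heq : mPow τ N b = wordApply (mPow τ n) (mPow τ k b) := by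
        rw [hN, add_comm n k, mPow_add]
      rw [heq, hst]
      refine hupre.trans ?_
      refine ⟨wordApply (mPow τ n) s, wordApply (mPow τ n) t, ?_⟩
      rw [← List.singleton_append, wordApply_append, wordApply_append,
        wordApply_singleton]
      simp
    set L := ((mPow τ k a).map (fun b => (mPow τ N b).length)).foldr max 1 with hL
    have hLb : ∀ b, (mPow τ N b).length ≤ L :=
      fun b => mem_le_foldr_max (List.mem_map_of_mem (hkall a b))
    have hL1 : 1 ≤ L := le_foldr_max _
    set p : ℕ → ℕ := fun j => (wordApply (mPow τ N) (word X 0 j)).length with hp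
    have hp0 : p 0 = 0 := by simp [hp, word, wordApply]
    have hpstep : ∀ j, p (j + 1) = p j + (mPow τ N (X j)).length := by
      intro j
      simp only [hp]
      rw [word_append, wordApply_append, word_one, wordApply_singleton,
        Nat.zero_add]
      simp
    have hblockOcc : ∀ j, OccursAt X (mPow τ N (X j)) (p j) := by
      intro j
      have h1 := fixedPt_mPow hfix N (j + 1)
      have heq : wordApply (mPow τ N) (word X 0 (j + 1)) =
          wordApply (mPow τ N) (word X 0 j) ++ mPow τ N (X j) ++ [] := by
        rw [word_append, wordApply_append, word_one, wordApply_singleton,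
          Nat.zero_add]
        simp
      have h3 := occursAt_sub h1 heq
      simpa [hp] using h3
    have hpub : ∀ j, j ≤ p j := by
      intro j
      induction j with
      | zero => omega
      | succ j ih =>
          have h1 : 1 ≤ (mPow τ N (X j)).length :=
            List.length_pos_iff.mpr (mPow_nonerasing hne N (X j))
          have := hpstep j
          omega
    refine ⟨2 * L, fun i => ?_⟩
    have hex : ∃ j, i ≤ p j := ⟨i, hpub i⟩
    obtain ⟨j, hji, hjmin⟩ : ∃ j, i ≤ p j ∧ ∀ j' < j, ¬ i ≤ p j' :=
      ⟨Nat.find hex, Nat.find_spec hex, fun j' h => Nat.find_min hex h⟩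
    have hjL : p j ≤ i + L := by
      cases j with
      | zero => rw [hp0]; omega
      | succ j' =>
          have h1 : ¬ i ≤ p j' := hjmin j' (Nat.lt_succ_self _)
          have h2 := hpstep j'
          have h3 := hLb (X j')
          omega
    obtain ⟨s, t, hst⟩ := hblock (X j)
    have hocc : OccursAt X u (p j + s.length) :=
      occursAt_sub (hblockOcc j) (by rw [← hst])
    refine ⟨p j + s.length, by omega, ?_, hocc⟩
    have hlen : s.length + u.length + t.length = (mPow τ N (X j)).length := by
      rw [← hst]; simp; omega
    have := hLb (X j)
    omega

end Cobham
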